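/- Monotonicity of solutions in G ∪ N (Lemma 5.3): Let α > 0 and let u be the corresponding solution. If either (i) there is b ∈ (0,∞) with u > 0 on [0,b) and u(b) = 0 (α ∈ N), or (ii) u(τ) > 0 for all τ > 0 and u(τ) → 0 as τ → ∞ (α ∈ G), then u'(τ) < 0 for all τ in (0, b) in case (i), respectively for all τ in (0, ∞) in case (ii). -/

import Mathlib

open Set Filter


noncomputable def Gaux (m a b s : ℝ) : ℝ :=
  a * m / (2 * m + 2) * s ^ (2 + 2 / m) - b / 2 * s ^ 2

lemma Gaux_zero (m a b : ℝ) (hm : 0 < m) : Gaux m a b 0 = 0 := by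
  unfold Gaux
  rw [Real.zero_rpow (by positivity)]
  norm_num

lemma Gaux_continuous (m a b : ℝ) (hm : 0 < m) : Continuous (Gaux m a b) := by
  have h1 : Continuous (fun s : ℝ => s ^ (2 + 2 / m)) := by
    rw [continuous_iff_continuousAt]
    intro s
    exact Real.continuousAt_rpow_const s _ (Or.inr (by positivity))
  exact ((continuous_const.mul h1).sub (continuous_const.mul (continuous_pow 2)))

lemma Gaux_hasDerivAt (m a b : ℝ) (hm : 0 < m) (s : ℝ) :
    HasDerivAt (fun s => Gaux m a b s) (a * s ^ (1 + 2 / m) - b * s) s := by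
  have hm' : (m : ℝ) ≠ 0 := ne_of_gt hm
  have hp : (1 : ℝ) ≤ 2 + 2 / m := by
    have : (0:ℝ) < 2 / m := by positivity
    linarith
  have h1 : HasDerivAt (fun s : ℝ => s ^ (2 + 2 / m)) ((2 + 2 / m) * s ^ ((2 + 2 / m) - 1)) s :=
    Real.hasDerivAt_rpow_const (Or.inr hp)
  have h2 := h1.const_mul (a * m / (2 * m + 2))
  have h3 : HasDerivAt (fun s : ℝ => b / 2 * s ^ 2) (b / 2 * (2 * s)) s := by
    simpa using ((hasDerivAt_pow 2 s).const_mul (b / 2))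
  have h4 := h2.sub h3
  have he : (2 + 2 / m) - 1 = 1 + 2 / m := by ring
  rw [he] at h4
  refine h4.congr_deriv ?_
  have h2m : (2 * m + 2) ≠ 0 := by positivity
  field_simp

lemma Gaux_nonneg_F_pos (m a b d : ℝ) (hm : 0 < m) (ha : 0 < a) (hb : 0 < b)
    (hd : 0 < d) (hG : 0 ≤ Gaux m a b d) : 0 < a * d ^ (1 + 2 / m) - b * d := by
  have hm' : (m : ℝ) ≠ 0 := ne_of_gt hm
  set X := d ^ (2 / m) with hX
  have hXpos : 0 < X := Real.rpow_pos_of_pos hd _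
  have h1 : d ^ ((2:ℝ) + 2 / m) = d ^ (2:ℕ) * X := by
    rw [← Real.rpow_natCast d 2, ← Real.rpow_add hd]
    norm_num
  have h2 : d ^ ((1:ℝ) + 2 / m) = d * X := by
    rw [← Real.rpow_one d, ← Real.rpow_add hd]
    norm_num
  unfold Gaux at hG
  rw [h1] at hG
  -- from hG : 0 ≤ a*m/(2m+2) * (d^2 * X) - b/2 * d^2
  have hd2 : (0:ℝ) < d ^ (2:ℕ) := by positivity
  have key : b / 2 * d ^ (2:ℕ) ≤ (a * m / (2 * m + 2) * X) * d ^ (2:ℕ) := by nlinarith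
  have key2 : b / 2 ≤ a * m / (2 * m + 2) * X := le_of_mul_le_mul_right (by linarith [key]) hd2
  have h2m : (0:ℝ) < 2 * m + 2 := by positivity
  have key3 : b / 2 * ((2 * m + 2) / m) ≤ (a * m / (2 * m + 2) * X) * ((2 * m + 2) / m) :=
    mul_le_mul_of_nonneg_right key2 (by positivity)
  have e1 : (a * m / (2 * m + 2) * X) * ((2 * m + 2) / m) = a * X := by
    field_simp
  have e2 : b / 2 * ((2 * m + 2) / m) = b + b / m := by
    field_simp
  rw [e1, e2] at key3
  have hbm : 0 < b / m := by positivity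
  have hb_lt : b < a * X := by linarith
  rw [h2]
  nlinarith [mul_pos hd (sub_pos.mpr hb_lt)]


lemma ev_pos_before {f : ℝ → ℝ} {x c : ℝ} (h : HasDerivAt f c x) (hc : c < 0) (hx : f x = 0) :
    ∀ᶠ s in nhdsWithin x (Iio x), 0 < f s := by
  have hs : Tendsto (slope f x) (nhdsWithin x (Iio x)) (nhds c) :=
    (hasDerivAt_iff_tendsto_slope.mp h).mono_left
      (nhdsWithin_mono x fun s hs => ne_of_lt hs)
  have h2 : ∀ᶠ s in nhdsWithin x (Iio x), slope f x s < 0 := hs.eventually_lt_const hc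
  filter_upwards [h2, self_mem_nhdsWithin] with s h1 h3
  have hsx : s < x := h3
  rw [slope_def_field, hx] at h1
  have hne : s - x ≠ 0 := sub_ne_zero.mpr (ne_of_lt hsx)
  have h4 : (f s - 0) / (s - x) * (s - x) = f s - 0 := div_mul_cancel₀ _ hne
  nlinarith [mul_neg_of_neg_of_pos h1 (show (0:ℝ) < -(s-x) by linarith)]

lemma ev_neg_after {f : ℝ → ℝ} {x c : ℝ} (h : HasDerivAt f c x) (hc : c < 0) (hx : f x = 0) :
    ∀ᶠ s in nhdsWithin x (Ioi x), f s < 0 := by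
  have hs : Tendsto (slope f x) (nhdsWithin x (Ioi x)) (nhds c) :=
    (hasDerivAt_iff_tendsto_slope.mp h).mono_left
      (nhdsWithin_mono x fun s hs => ne_of_gt hs)
  have h2 : ∀ᶠ s in nhdsWithin x (Ioi x), slope f x s < 0 := hs.eventually_lt_const hc
  filter_upwards [h2, self_mem_nhdsWithin] with s h1 h3
  have hsx : x < s := h3
  rw [slope_def_field, hx] at h1
  have hne : s - x ≠ 0 := sub_ne_zero.mpr (ne_of_gt hsx)
  have h4 : (f s - 0) / (s - x) * (s - x) = f s - 0 := div_mul_cancel₀ _ hne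
  nlinarith [mul_neg_of_neg_of_pos h1 (show (0:ℝ) < s - x by linarith)]

lemma ev_gt_after {f : ℝ → ℝ} {x c : ℝ} (h : HasDerivAt f c x) (hc : 0 < c) :
    ∀ᶠ s in nhdsWithin x (Ioi x), f x < f s := by
  have hs : Tendsto (slope f x) (nhdsWithin x (Ioi x)) (nhds c) :=
    (hasDerivAt_iff_tendsto_slope.mp h).mono_left
      (nhdsWithin_mono x fun s hs => ne_of_gt hs)
  have h2 : ∀ᶠ s in nhdsWithin x (Ioi x), 0 < slope f x s := hs.eventually_const_lt hc
  filter_upwards [h2, self_mem_nhdsWithin] with s h1 h3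
  have hsx : x < s := h3
  rw [slope_def_field] at h1
  have hne : s - x ≠ 0 := sub_ne_zero.mpr (ne_of_gt hsx)
  have h4 : (f s - f x) / (s - x) * (s - x) = f s - f x := div_mul_cancel₀ _ hne
  nlinarith [mul_pos h1 (show (0:ℝ) < s - x by linarith)]



lemma energy_hasDerivAt (m a b : ℝ) (hm : 0 < m) (u : ℝ → ℝ)
    (hud : ∀ τ ∈ Ioi (0 : ℝ), DifferentiableAt ℝ u τ)
    (hud' : ∀ τ ∈ Ioi (0 : ℝ), DifferentiableAt ℝ (deriv u) τ)
    (hode : ∀ τ ∈ Ioi (0 : ℝ), deriv (deriv u) τ + (Real.cosh τ / Real.sinh τ) * deriv u τ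
        + (a * (u τ) ^ (1 + 2 / m) - b * (u τ)) = 0)
    {τ : ℝ} (hτ : τ ∈ Ioi (0:ℝ)) :
    HasDerivAt (fun τ => (deriv u τ) ^ 2 / 2 + Gaux m a b (u τ))
      (-(Real.cosh τ / Real.sinh τ) * (deriv u τ) ^ 2) τ := by
  have h1 : HasDerivAt (deriv u) (deriv (deriv u) τ) τ := (hud' τ hτ).hasDerivAt
  have h2 := (h1.pow 2).div_const 2
  have h3 : HasDerivAt (fun τ => Gaux m a b (u τ))
      ((a * (u τ) ^ (1 + 2 / m) - b * u τ) * deriv u τ) τ :=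
    (Gaux_hasDerivAt m a b hm (u τ)).comp τ (hud τ hτ).hasDerivAt
  have h4 := h2.add h3
  refine h4.congr_deriv ?_
  have h5 := hode τ hτ
  norm_num
  linear_combination (deriv u τ) * h5

lemma energy_antitone (m a b : ℝ) (hm : 0 < m) (u : ℝ → ℝ)
    (hud : ∀ τ ∈ Ioi (0 : ℝ), DifferentiableAt ℝ u τ)
    (hud' : ∀ τ ∈ Ioi (0 : ℝ), DifferentiableAt ℝ (deriv u) τ)
    (hode : ∀ τ ∈ Ioi (0 : ℝ), deriv (deriv u) τ + (Real.cosh τ / Real.sinh τ) * deriv u τ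
        + (a * (u τ) ^ (1 + 2 / m) - b * (u τ)) = 0)
    {x y : ℝ} (hx : 0 < x) :
    AntitoneOn (fun τ => (deriv u τ) ^ 2 / 2 + Gaux m a b (u τ)) (Icc x y) := by
  apply antitoneOn_of_deriv_nonpos (convex_Icc x y)
  · intro τ hτ
    exact (energy_hasDerivAt m a b hm u hud hud' hode
      (lt_of_lt_of_le hx hτ.1)).continuousAt.continuousWithinAt
  · intro τ hτ
    rw [interior_Icc] at hτ
    exact (energy_hasDerivAt m a b hm u hud hud' hode
      (lt_of_lt_of_le hx (le_of_lt hτ.1))).differentiableAt.differentiableWithinAt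
  · intro τ hτ
    rw [interior_Icc] at hτ
    have hτ0 : (0:ℝ) < τ := lt_of_lt_of_le hx (le_of_lt hτ.1)
    rw [(energy_hasDerivAt m a b hm u hud hud' hode hτ0).deriv]
    have h1 : 0 < Real.sinh τ := Real.sinh_pos_iff.mpr hτ0
    have h2 : (0:ℝ) < Real.cosh τ := Real.cosh_pos τ
    have h3 : 0 ≤ Real.cosh τ / Real.sinh τ := le_of_lt (div_pos h2 h1)
    nlinarith [sq_nonneg (deriv u τ)]

lemma core (m a b : ℝ) (hm : 0 < m) (ha : 0 < a) (hb : 0 < b)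
    (α : ℝ) (hα : 0 < α) (u : ℝ → ℝ)
    (huc : ContinuousOn u (Ici 0))
    (hud : ∀ τ ∈ Ioi (0 : ℝ), DifferentiableAt ℝ u τ)
    (hud' : ∀ τ ∈ Ioi (0 : ℝ), DifferentiableAt ℝ (deriv u) τ)
    (hode : ∀ τ ∈ Ioi (0 : ℝ), deriv (deriv u) τ + (Real.cosh τ / Real.sinh τ) * deriv u τ
        + (a * (u τ) ^ (1 + 2 / m) - b * (u τ)) = 0)
    (hu0 : u 0 = α)
    (hu'0 : Tendsto (deriv u) (nhdsWithin 0 (Ioi 0)) (nhds 0))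
    (T : Set ℝ) (hTopen : IsOpen T) (hTsub : T ⊆ Ioi 0)
    (hTord : ∀ x ∈ T, ∀ y : ℝ, 0 < y → y ≤ x → y ∈ T)
    (hupos : ∀ τ ∈ T, 0 < u τ)
    (hC : ∀ τ1 ∈ T, deriv u τ1 = 0 → 0 ≤ Gaux m a b (u τ1))
    (hR : ∀ τ3 ∈ T, ∃ R, τ3 < R ∧ u R < α ∧ Ico τ3 R ⊆ T) :
    ∀ τ ∈ T, deriv u τ < 0 := by
  have hgc : ∀ τ ∈ Ioi (0 : ℝ), ContinuousAt (deriv u) τ := fun τ hτ => (hud' τ hτ).continuousAt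
  have huC : ∀ τ : ℝ, 0 < τ → ContinuousAt u τ := fun τ hτ =>
    huc.continuousAt (Ici_mem_nhds hτ)
  -- Fact D : local behavior at critical points
  have hFD : ∀ σ ∈ T, deriv u σ = 0 →
      (∀ᶠ s in nhdsWithin σ (Iio σ), 0 < deriv u s) ∧
      (∀ᶠ s in nhdsWithin σ (Ioi σ), deriv u s < 0) := by
    intro σ hσT hσ0
    have hσ : (0:ℝ) < σ := hTsub hσT
    have hF : 0 < a * (u σ) ^ (1 + 2 / m) - b * u σ :=
      Gaux_nonneg_F_pos m a b (u σ) hm ha hb (hupos σ hσT) (hC σ hσT hσ0)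
    have hdd : deriv (deriv u) σ = -(a * (u σ) ^ (1 + 2 / m) - b * u σ) := by
      have h := hode σ hσ
      rw [hσ0, mul_zero] at h
      linarith
    have hD : HasDerivAt (deriv u) (deriv (deriv u) σ) σ := (hud' σ hσ).hasDerivAt
    rw [hdd] at hD
    exact ⟨ev_pos_before hD (by linarith) hσ0, ev_neg_after hD (by linarith) hσ0⟩
  -- limit of energy at 0+
  have hua : Tendsto u (nhdsWithin 0 (Ioi 0)) (nhds α) := by
    have h := (huc 0 self_mem_Ici).tendsto
    rw [hu0] at h
    exact h.mono_left (nhdsWithin_mono 0 Ioi_subset_Ici_self)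
  have hEα : Tendsto (fun ε => (deriv u ε) ^ 2 / 2 + Gaux m a b (u ε)) (nhdsWithin 0 (Ioi 0))
      (nhds (Gaux m a b α)) := by
    have h1 : Tendsto (fun ε => (deriv u ε) ^ 2 / 2) (nhdsWithin 0 (Ioi 0)) (nhds ((0:ℝ)^2/2)) :=
      (hu'0.pow 2).div_const 2
    have h2 : Tendsto (fun ε => Gaux m a b (u ε)) (nhdsWithin 0 (Ioi 0))
        (nhds (Gaux m a b α)) := ((Gaux_continuous m a b hm).continuousAt.tendsto).comp hua
    have h3 := h1.add h2
    norm_num at h3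
    exact h3
  -- main claim: no point with positive derivative
  have hmain : ∀ τ1 ∈ T, ¬(0 < deriv u τ1) := by
    intro τ1 hτ1T hgpos
    have hτ1 : (0:ℝ) < τ1 := hTsub hτ1T
    by_cases hS : ∃ t, t ∈ Ioc 0 τ1 ∧ deriv u t ≤ 0
    · -- there is an earlier nonpositive derivative point
      obtain ⟨t0, ht0⟩ := hS
      set S := {t : ℝ | t ∈ Ioc 0 τ1 ∧ deriv u t ≤ 0} with hSdef
      have hSne : S.Nonempty := ⟨t0, ht0⟩
      have hSbdd : BddAbove S := ⟨τ1, fun t ht => ht.1.2⟩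
      set σ := sSup S with hσdef
      have hσle : σ ≤ τ1 := csSup_le hSne fun t ht => ht.1.2
      have hσpos : 0 < σ := lt_of_lt_of_le ht0.1.1 (le_csSup hSbdd ht0)
      have hgσ : deriv u σ ≤ 0 := by
        by_contra hcon
        push_neg at hcon
        have hev : ∀ᶠ s in nhds σ, 0 < deriv u s :=
          ((hgc σ hσpos).tendsto).eventually_const_lt hcon
        rw [Metric.eventually_nhds_iff] at hev
        obtain ⟨ε, hε, hball⟩ := hev
        obtain ⟨t, htS, htgt⟩ := exists_lt_of_lt_csSup hSne (by linarith : σ - ε < σ)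
        have htle : t ≤ σ := le_csSup hSbdd htS
        have : dist t σ < ε := by
          rw [Real.dist_eq, abs_lt]
          constructor <;> linarith
        linarith [hball this, htS.2]
      have hσlt : σ < τ1 := lt_of_le_of_ne hσle (by intro h; rw [h] at hgσ; linarith)
      have hafter : ∀ t, σ < t → t ≤ τ1 → 0 < deriv u t := by
        intro t h1 h2
        by_contra hc
        push_neg at hc
        have htS : t ∈ S := ⟨⟨lt_trans hσpos h1, h2⟩, hc⟩
        linarith [le_csSup hSbdd htS]
      have hgσ0 : deriv u σ = 0 := by
        have h1 : Tendsto (deriv u) (nhdsWithin σ (Ioi σ)) (nhds (deriv u σ)) :=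
          ((hgc σ hσpos).tendsto).mono_left nhdsWithin_le_nhds
        have h2 : ∀ᶠ s in nhdsWithin σ (Ioi σ), 0 ≤ deriv u s := by
          filter_upwards [Ioo_mem_nhdsGT_of_mem ⟨le_refl σ, hσlt⟩] with s hs
          exact le_of_lt (hafter s hs.1 (le_of_lt hs.2))
        exact le_antisymm hgσ (ge_of_tendsto h1 h2)
      have hσT : σ ∈ T := hTord τ1 hτ1T σ hσpos hσle
      obtain ⟨-, hneg⟩ := hFD σ hσT hgσ0
      have hmem : Ioo σ τ1 ∈ nhdsWithin σ (Ioi σ) := Ioo_mem_nhdsGT_of_mem ⟨le_refl σ, hσlt⟩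
      obtain ⟨s, hs1, hs2⟩ := (hneg.and (eventually_of_mem hmem fun x h => h)).exists
      linarith [hafter s hs2.1 (le_of_lt hs2.2)]
    · -- derivative positive on all of (0, τ1]
      push_neg at hS
      have hgpos' : ∀ t, t ∈ Ioc 0 τ1 → 0 < deriv u t := fun t ht => hS t ht
      have humono : ∀ ε, 0 < ε → ε < τ1 → u ε < u τ1 := by
        intro ε hε hετ
        have hsm : StrictMonoOn u (Icc ε τ1) := by
          apply strictMonoOn_of_deriv_pos (convex_Icc ε τ1)
          · intro t ht
            exact (huC t (lt_of_lt_of_le hε ht.1)).continuousWithinAt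
          · intro t ht
            rw [interior_Icc] at ht
            exact hgpos' t ⟨lt_trans hε ht.1, le_of_lt ht.2⟩
        exact hsm ⟨le_refl ε, le_of_lt hετ⟩ ⟨le_of_lt hετ, le_refl τ1⟩ hετ
      have hαle : α ≤ u τ1 := by
        apply le_of_tendsto hua
        filter_upwards [Ioo_mem_nhdsGT_of_mem ⟨le_refl (0:ℝ), hτ1⟩] with ε hε
        exact le_of_lt (humono ε hε.1 hε.2)
      -- a later point with u > α
      have hev3 : ∀ᶠ s in nhdsWithin τ1 (Ioi τ1), u τ1 < u s :=
        ev_gt_after (hud τ1 hτ1).hasDerivAt hgpos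
      have hTev : T ∈ nhdsWithin τ1 (Ioi τ1) :=
        mem_nhdsWithin_of_mem_nhds (hTopen.mem_nhds hτ1T)
      obtain ⟨τ3, hτ3u, hτ3T⟩ := (hev3.and (eventually_of_mem hTev fun x h => h)).exists
      have hτ3α : α < u τ3 := lt_of_le_of_lt hαle hτ3u
      have hτ3pos : (0:ℝ) < τ3 := hTsub hτ3T
      obtain ⟨R, hR1, hR2, hR3⟩ := hR τ3 hτ3T
      set W := {t : ℝ | t ∈ Icc τ3 R ∧ u t ≤ α} with hWdef
      have hWne : W.Nonempty := ⟨R, ⟨⟨le_of_lt hR1, le_refl R⟩, le_of_lt hR2⟩⟩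
      have hWbdd : BddBelow W := ⟨τ3, fun t ht => ht.1.1⟩
      set σ' := sInf W with hσ'def
      have h1 : τ3 ≤ σ' := le_csInf hWne fun t ht => ht.1.1
      have h2 : σ' ≤ R := csInf_le hWbdd ⟨⟨le_of_lt hR1, le_refl R⟩, le_of_lt hR2⟩
      have hσ'pos : 0 < σ' := lt_of_lt_of_le hτ3pos h1
      have huσ'le : u σ' ≤ α := by
        by_contra hcon
        push_neg at hcon
        have hev : ∀ᶠ s in nhds σ', α < u s :=
          ((huC σ' hσ'pos).tendsto).eventually_const_lt hcon
        rw [Metric.eventually_nhds_iff] at hev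
        obtain ⟨ε, hε, hball⟩ := hev
        obtain ⟨t, htW, htlt⟩ := exists_lt_of_csInf_lt hWne (by linarith : σ' < σ' + ε)
        have htge : σ' ≤ t := csInf_le hWbdd htW
        have : dist t σ' < ε := by
          rw [Real.dist_eq, abs_lt]
          constructor <;> linarith
        linarith [hball this, htW.2]
      have hτ3σ' : τ3 < σ' := by
        rcases lt_or_eq_of_le h1 with h | h
        · exact h
        · exfalso; rw [← h] at huσ'le; linarith
      have hbefore : ∀ t, τ3 ≤ t → t < σ' → α < u t := by
        intro t ht1 ht2
        by_contra hc
        push_neg at hc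
        have htW : t ∈ W := ⟨⟨ht1, le_trans (le_of_lt ht2) h2⟩, hc⟩
        linarith [csInf_le hWbdd htW]
      have huσ' : u σ' = α := by
        apply le_antisymm huσ'le
        have ht : Tendsto u (nhdsWithin σ' (Iio σ')) (nhds (u σ')) :=
          ((huC σ' hσ'pos).tendsto).mono_left nhdsWithin_le_nhds
        apply ge_of_tendsto ht
        filter_upwards [Ioo_mem_nhdsLT_of_mem ⟨hτ3σ', le_refl σ'⟩] with s hs
        exact le_of_lt (hbefore s (le_of_lt hs.1) hs.2)
      -- energy comparison
      have hEσ' : (deriv u σ') ^ 2 / 2 + Gaux m a b (u σ') ≤ Gaux m a b α := by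
        apply ge_of_tendsto hEα
        filter_upwards [Ioo_mem_nhdsGT_of_mem ⟨le_refl (0:ℝ), hσ'pos⟩] with ε hε
        exact energy_antitone m a b hm u hud hud' hode hε.1
          ⟨le_refl ε, le_of_lt hε.2⟩ ⟨le_of_lt hε.2, le_refl σ'⟩ (le_of_lt hε.2)
      have hgσ'0 : deriv u σ' = 0 := by
        rw [huσ'] at hEσ'
        nlinarith [sq_nonneg (deriv u σ')]
      have hσ'T : σ' ∈ T := by
        apply hR3
        refine ⟨h1, lt_of_le_of_ne h2 ?_⟩
        intro h
        rw [h] at huσ'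
        linarith [hR2, huσ' ▸ hR2]
      obtain ⟨hbef, -⟩ := hFD σ' hσ'T hgσ'0
      have hmemI : Ioo τ3 σ' ∈ nhdsWithin σ' (Iio σ') :=
        Ioo_mem_nhdsLT_of_mem ⟨hτ3σ', le_refl σ'⟩
      have hcomb : {s : ℝ | 0 < deriv u s ∧ s ∈ Ioo τ3 σ'} ∈ nhdsWithin σ' (Iio σ') :=
        hbef.and (eventually_of_mem hmemI fun x h => h)
      obtain ⟨l, hl, hsub⟩ := mem_nhdsLT_iff_exists_Ioo_subset.mp hcomb
      have hl' : max l τ3 < σ' := max_lt hl hτ3σ'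
      set t := (max l τ3 + σ') / 2 with htdef
      have ht1 : max l τ3 < t := by rw [htdef]; linarith
      have ht2 : t < σ' := by rw [htdef]; linarith
      have htI : t ∈ Ioo l σ' := ⟨lt_of_le_of_lt (le_max_left l τ3) ht1, ht2⟩
      have htτ3 : τ3 < t := lt_of_le_of_lt (le_max_right l τ3) ht1
      have hsm : StrictMonoOn u (Icc t σ') := by
        apply strictMonoOn_of_deriv_pos (convex_Icc t σ')
        · intro s hs
          exact (huC s (lt_of_lt_of_le (lt_trans hτ3pos htτ3) hs.1)).continuousWithinAt
        · intro s hs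
          rw [interior_Icc] at hs
          exact (hsub ⟨lt_trans htI.1 hs.1, hs.2⟩).1
      have hut : u t < u σ' := hsm ⟨le_refl t, le_of_lt ht2⟩ ⟨le_of_lt ht2, le_refl σ'⟩ ht2
      rw [huσ'] at hut
      linarith [hbefore t (le_of_lt htτ3) ht2]
  intro τ hτT
  rcases lt_trichotomy (deriv u τ) 0 with h | h | h
  · exact h
  · exfalso
    obtain ⟨hbefore, -⟩ := hFD τ hτT h
    have hmem : Ioo 0 τ ∈ nhdsWithin τ (Iio τ) :=
      Ioo_mem_nhdsLT_of_mem ⟨hTsub hτT, le_refl τ⟩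
    obtain ⟨s, hs1, hs2⟩ := (hbefore.and (eventually_of_mem hmem fun x h => h)).exists
    exact hmain s (hTord τ hτT s hs2.1 (le_of_lt hs2.2)) hs1
  · exact absurd h (hmain τ hτT)


/-- Monotonicity of solutions in `G ∪ N` (Lemma 5.3): if the solution `u` of the
initial value problem either (i) has a smallest zero `b(α) ∈ (0,∞)` (case `α ∈ N`),
or (ii) stays positive and tends to `0` at infinity (case `α ∈ G`), then
`u' < 0` on `(0, b(α))`, respectively on `(0,∞)`. -/
theorem monotonicity_of_solutions
    (m a b : ℝ) (hm : 2 < m) (ha : 0 < a) (hb : 0 < b)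
    (F : ℝ → ℝ) (hF : ∀ s, F s = a * s ^ (1 + 2 / m) - b * s)
    (α : ℝ) (hα : 0 < α)
    (u : ℝ → ℝ)
    (huc : ContinuousOn u (Ici 0))
    (hud : ∀ τ ∈ Ioi (0 : ℝ), DifferentiableAt ℝ u τ)
    (hud' : ∀ τ ∈ Ioi (0 : ℝ), DifferentiableAt ℝ (deriv u) τ)
    (hode : ∀ τ ∈ Ioi (0 : ℝ),
      deriv (deriv u) τ + (Real.cosh τ / Real.sinh τ) * deriv u τ + F (u τ) = 0)
    (hu0 : u 0 = α)
    (hu'0 : Tendsto (deriv u) (nhdsWithin 0 (Ioi 0)) (nhds 0)) :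
    (∀ bα : ℝ, 0 < bα → u bα = 0 → (∀ τ ∈ Ico 0 bα, 0 < u τ) →
        ∀ τ ∈ Ioo 0 bα, deriv u τ < 0) ∧
    ((∀ τ ∈ Ioi (0 : ℝ), 0 < u τ) → Tendsto u atTop (nhds 0) →
        ∀ τ ∈ Ioi (0 : ℝ), deriv u τ < 0) := by
  have hm0 : (0:ℝ) < m := by linarith
  have hode' : ∀ τ ∈ Ioi (0 : ℝ), deriv (deriv u) τ + (Real.cosh τ / Real.sinh τ) * deriv u τ
      + (a * (u τ) ^ (1 + 2 / m) - b * (u τ)) = 0 := by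
    intro τ hτ
    have h := hode τ hτ
    rwa [hF] at h
  constructor
  · -- case (i)
    intro bα hbα hubα hup τ hτ
    have hC : ∀ τ1 ∈ Ioo 0 bα, deriv u τ1 = 0 → 0 ≤ Gaux m a b (u τ1) := by
      intro τ1 hτ1 h0
      have h1 : (deriv u bα) ^ 2 / 2 + Gaux m a b (u bα) ≤
          (deriv u τ1) ^ 2 / 2 + Gaux m a b (u τ1) :=
        energy_antitone m a b hm0 u hud hud' hode' hτ1.1
          ⟨le_refl τ1, le_of_lt hτ1.2⟩ ⟨le_of_lt hτ1.2, le_refl bα⟩ (le_of_lt hτ1.2)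
      rw [hubα, Gaux_zero m a b hm0, h0] at h1
      nlinarith [sq_nonneg (deriv u bα)]
    have hR : ∀ τ3 ∈ Ioo 0 bα, ∃ R, τ3 < R ∧ u R < α ∧ Ico τ3 R ⊆ Ioo 0 bα := by
      intro τ3 hτ3
      exact ⟨bα, hτ3.2, by rw [hubα]; exact hα,
        fun x hx => ⟨lt_of_lt_of_le hτ3.1 hx.1, hx.2⟩⟩
    exact core m a b hm0 ha hb α hα u huc hud hud' hode' hu0 hu'0
      (Ioo 0 bα) isOpen_Ioo (fun x hx => hx.1)
      (fun x hx y hy hyx => ⟨hy, lt_of_le_of_lt hyx hx.2⟩)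
      (fun s hs => hup s ⟨le_of_lt hs.1, hs.2⟩) hC hR τ hτ
  · -- case (ii)
    intro hup hutop τ hτ
    have hC : ∀ τ1 ∈ Ioi (0:ℝ), deriv u τ1 = 0 → 0 ≤ Gaux m a b (u τ1) := by
      intro τ1 hτ1 h0
      by_contra hneg
      push_neg at hneg
      have hGu : Tendsto (fun τ => Gaux m a b (u τ)) atTop (nhds 0) := by
        have h := ((Gaux_continuous m a b hm0).tendsto 0).comp hutop
        rw [Gaux_zero m a b hm0] at h
        exact h
      have hev : ∀ᶠ s in atTop, Gaux m a b (u τ1) / 2 < Gaux m a b (u s) :=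
        hGu.eventually_const_lt (by linarith)
      obtain ⟨s, hτ1s, hsgt⟩ := ((eventually_ge_atTop τ1).and hev).exists
      have h1 : (deriv u s) ^ 2 / 2 + Gaux m a b (u s) ≤
          (deriv u τ1) ^ 2 / 2 + Gaux m a b (u τ1) :=
        energy_antitone m a b hm0 u hud hud' hode' hτ1
          ⟨le_refl τ1, hτ1s⟩ ⟨hτ1s, le_refl s⟩ hτ1s
      rw [h0] at h1
      nlinarith [sq_nonneg (deriv u s)]
    have hR : ∀ τ3 ∈ Ioi (0:ℝ), ∃ R, τ3 < R ∧ u R < α ∧ Ico τ3 R ⊆ Ioi (0:ℝ) := by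
      intro τ3 hτ3
      have hev : ∀ᶠ R in atTop, u R < α := hutop.eventually_lt_const hα
      obtain ⟨R, hRτ3, hRu⟩ := ((eventually_gt_atTop τ3).and hev).exists
      exact ⟨R, hRτ3, hRu, fun x hx => lt_of_lt_of_le hτ3 hx.1⟩
    exact core m a b hm0 ha hb α hα u huc hud hud' hode' hu0 hu'0
      (Ioi 0) isOpen_Ioi (fun x hx => hx)
      (fun x hx y hy hyx => hy) hup hC hR τ hτ
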